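/- Every mixed Hodge structure (V, W, F) admits a Deligne splitting: a direct sum decomposition V_ℂ = ⊕_{p,q} I^{p,q}(V) such that W_m V_ℂ = ⊕_{p+q ≤ m} I^{p,q}(V) and F^k V_ℂ = ⊕_{p ≥ k} I^{p,q}(V), and this splitting is functorial: any morphism of mixed Hodge structures sends I^{p,q}(V) into I^{p,q}(V'). -/

import Mathlib

open LinearMap Submodule TensorProduct

variable (K : Type) [Field K] [Algebra K ℝ] [Algebra K ℂ] [IsScalarTower K ℝ ℂ]

/-- Complex conjugation on `ℂ`, as a `K`-linear map for a subfield `K ⊆ ℝ`. -/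
def conjK : ℂ →ₗ[K] ℂ where
  toFun := star
  map_add' := star_add
  map_smul' s c := by
    simp only [RingHom.id_apply]
    rw [Algebra.smul_def, Algebra.smul_def, star_mul']
    congr 1
    rw [IsScalarTower.algebraMap_apply K ℝ ℂ]
    exact Complex.conj_ofReal _

variable {V : Type} [AddCommGroup V] [Module K V]

/-- Conjugation on the complexification `ℂ ⊗[K] V`. -/
noncomputable def conjT : ℂ ⊗[K] V →ₗ[K] ℂ ⊗[K] V :=
  TensorProduct.map (conjK K) LinearMap.id

lemma conjT_smul (c : ℂ) (x : ℂ ⊗[K] V) :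
    conjT K (c • x) = (starRingEnd ℂ c) • conjT K x := by
  induction x using TensorProduct.induction_on with
  | zero => simp
  | tmul c' v =>
      rw [TensorProduct.smul_tmul']
      simp [conjT, conjK, TensorProduct.smul_tmul']
  | add x y hx hy => simp [smul_add, map_add, hx, hy]

/-- The conjugate of a `ℂ`-submodule of the complexification. -/
noncomputable def conjSub (S : Submodule ℂ (ℂ ⊗[K] V)) : Submodule ℂ (ℂ ⊗[K] V) where
  carrier := conjT K '' S
  add_mem' := by
    rintro _ _ ⟨x, hx, rfl⟩ ⟨y, hy, rfl⟩
    exact ⟨x + y, S.add_mem hx hy, map_add _ _ _⟩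
  zero_mem' := ⟨0, S.zero_mem, map_zero _⟩
  smul_mem' c := by
    rintro _ ⟨x, hx, rfl⟩
    refine ⟨(starRingEnd ℂ c) • x, S.smul_mem _ hx, ?_⟩
    rw [conjT_smul]
    simp

/-- The data of a pre-mixed Hodge structure: an increasing, exhaustive, bounded below
weight filtration `W` on `V` and a decreasing, exhaustive, bounded filtration `F`
(the Hodge filtration) on `V_ℂ = ℂ ⊗ V`. -/
structure PreMHS (V : Type) [AddCommGroup V] [Module K V] where
  W : ℤ → Submodule K V
  Wmono : ∀ m, W m ≤ W (m + 1)
  Wexh : ∀ v : V, ∃ m, v ∈ W m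
  Wbdd : ∃ m, W m = ⊥
  F : ℤ → Submodule ℂ (ℂ ⊗[K] V)
  Fanti : ∀ p, F (p + 1) ≤ F p
  Fexh : ∃ p, F p = ⊤
  Fbdd : ∃ p, F p = ⊥

namespace PreMHS

variable {K} (H : PreMHS K V)

/-- The weight filtration on the complexification. -/
noncomputable def WC (m : ℤ) : Submodule ℂ (ℂ ⊗[K] V) := (H.W m).baseChange ℂ

/-- The weight graded pieces of the complexification. -/
noncomputable abbrev GrW (m : ℤ) : Type :=
  H.WC m ⧸ (H.WC (m - 1)).comap (H.WC m).subtype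

/-- The filtration induced by `F` on the weight graded pieces. -/
noncomputable def FGr (m p : ℤ) : Submodule ℂ (H.GrW m) :=
  Submodule.map (Submodule.mkQ _) ((H.F p).comap (H.WC m).subtype)

/-- The filtration induced by the conjugate of `F` on the weight graded pieces. -/
noncomputable def cFGr (m q : ℤ) : Submodule ℂ (H.GrW m) :=
  Submodule.map (Submodule.mkQ _) ((conjSub K (H.F q)).comap (H.WC m).subtype)

/-- `(W, F)` is a mixed Hodge structure if `F` and its conjugate induce `m`-opposed
filtrations on each weight graded piece `Gr^W_m`, i.e. `Gr^W_m = F^p ⊕ conj(F^{m-p+1})`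
for all `p` (so each `Gr^W_m` is a pure Hodge structure of weight `m`). -/
def IsMHS : Prop := ∀ m p : ℤ, IsCompl (H.FGr m p) (H.cFGr m (m - p + 1))

end PreMHS

/-- A morphism of (pre-)mixed Hodge structures. -/
structure IsMHSHom {V V' : Type} [AddCommGroup V] [Module K V] [AddCommGroup V']
    [Module K V'] (H : PreMHS K V) (H' : PreMHS K V') (f : V →ₗ[K] V') : Prop where
  mapW : ∀ m, (H.W m).map f ≤ H'.W m
  mapF : ∀ p, (H.F p).map (f.baseChange ℂ) ≤ H'.F p
/-- Deligne's canonical splitting: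
`I^{p,q} = F^p ∩ W_{p+q} ∩ (conj(F^q) ∩ W_{p+q} + Σ_{j≥2} conj(F^{q-j+1}) ∩ W_{p+q-j})`. -/
noncomputable def deligneI {V : Type} [AddCommGroup V] [Module K V]
    (H : PreMHS K V) (p q : ℤ) : Submodule ℂ (ℂ ⊗[K] V) :=
  H.F p ⊓ H.WC (p + q) ⊓
    ((conjSub K (H.F q) ⊓ H.WC (p + q)) ⊔
      ⨆ j : {j : ℤ // 2 ≤ j}, (conjSub K (H.F (q - j.1 + 1)) ⊓ H.WC (p + q - j.1)))

section Aux
set_option linter.unusedSectionVars false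

variable {K : Type} [Field K] [Algebra K ℝ] [Algebra K ℂ] [IsScalarTower K ℝ ℂ]
variable {V : Type} [AddCommGroup V] [Module K V]

lemma conjT_tmul (c : ℂ) (v : V) : conjT K (c ⊗ₜ[K] v) = (star c) ⊗ₜ[K] v := rfl

lemma conjT_conjT (x : ℂ ⊗[K] V) : conjT K (conjT K x) = x := by
  induction x using TensorProduct.induction_on with
  | zero => simp
  | tmul c v => rw [conjT_tmul, conjT_tmul, star_star]
  | add x y hx hy => rw [map_add, map_add, hx, hy]

lemma mem_conjSub {S : Submodule ℂ (ℂ ⊗[K] V)} {x : ℂ ⊗[K] V} :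
    x ∈ conjSub K S ↔ conjT K x ∈ S := by
  constructor
  · rintro ⟨y, hy, rfl⟩; rwa [conjT_conjT]
  · intro h; exact ⟨conjT K x, h, conjT_conjT x⟩

lemma conjSub_mono {S T : Submodule ℂ (ℂ ⊗[K] V)} (h : S ≤ T) :
    conjSub K S ≤ conjSub K T := by
  intro x hx; rw [mem_conjSub] at hx ⊢; exact h hx

lemma conjSub_bot : conjSub K (⊥ : Submodule ℂ (ℂ ⊗[K] V)) = ⊥ := by
  ext x
  simp only [mem_conjSub, Submodule.mem_bot]
  constructor
  · intro h; rw [← conjT_conjT (K := K) x, h, map_zero]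
  · rintro rfl; exact map_zero _

lemma conjSub_top : conjSub K (⊤ : Submodule ℂ (ℂ ⊗[K] V)) = ⊤ := by
  ext x; simp [mem_conjSub]

lemma baseChange_mono' {S T : Submodule K V} (h : S ≤ T) :
    S.baseChange ℂ ≤ T.baseChange ℂ :=
  Submodule.baseChange_mono (A := ℂ) h

namespace PreMHS

variable (H : PreMHS K V)

lemma F_antitone {p p' : ℤ} (h : p ≤ p') : H.F p' ≤ H.F p := by
  refine Int.le_induction (motive := fun n _ => H.F n ≤ H.F p) (le_refl _)
    (fun n _ ih => le_trans (H.Fanti n) ih) p' h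

lemma W_mono' {m m' : ℤ} (h : m ≤ m') : H.W m ≤ H.W m' := by
  refine Int.le_induction (motive := fun n _ => H.W m ≤ H.W n) (le_refl _)
    (fun n _ ih => le_trans ih (H.Wmono n)) m' h

lemma WC_mono {m m' : ℤ} (h : m ≤ m') : H.WC m ≤ H.WC m' :=
  baseChange_mono' (H.W_mono' h)

lemma cF_antitone {q q' : ℤ} (h : q ≤ q') : conjSub K (H.F q') ≤ conjSub K (H.F q) :=
  conjSub_mono (H.F_antitone h)

lemma exists_F_top : ∃ p₀ : ℤ, ∀ p ≤ p₀, H.F p = ⊤ := by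
  obtain ⟨p₀, hp₀⟩ := H.Fexh
  exact ⟨p₀, fun p hp => top_le_iff.mp (hp₀ ▸ H.F_antitone hp)⟩

lemma exists_F_bot : ∃ p₁ : ℤ, ∀ p, p₁ ≤ p → H.F p = ⊥ := by
  obtain ⟨p₁, hp₁⟩ := H.Fbdd
  exact ⟨p₁, fun p hp => le_bot_iff.mp (hp₁ ▸ H.F_antitone hp)⟩

lemma exists_WC_bot : ∃ m₀ : ℤ, ∀ m ≤ m₀, H.WC m = ⊥ := by
  obtain ⟨m₀, hm₀⟩ := H.Wbdd
  refine ⟨m₀, fun m hm => ?_⟩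
  have : H.W m = ⊥ := le_bot_iff.mp (hm₀ ▸ H.W_mono' hm)
  rw [WC, this, Submodule.baseChange_bot]

lemma exists_W_top [FiniteDimensional K V] : ∃ m₁ : ℤ, H.W m₁ = ⊤ := by
  obtain ⟨s, hs⟩ := Module.finite_def.mp ‹FiniteDimensional K V›
  have key : ∀ t : Finset V, ∃ m : ℤ, ∀ v ∈ t, v ∈ H.W m := by
    classical
    intro t
    induction t using Finset.induction with
    | empty => exact ⟨0, by simp⟩
    | insert _ _ hx ih =>
        obtain ⟨m, hm⟩ := ih
        obtain ⟨m', hm'⟩ := H.Wexh _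
        refine ⟨max m m', fun v hv => ?_⟩
        rcases Finset.mem_insert.mp hv with rfl | hv
        · exact H.W_mono' (le_max_right _ _) hm'
        · exact H.W_mono' (le_max_left _ _) (hm v hv)
  obtain ⟨m, hm⟩ := key s
  refine ⟨m, top_le_iff.mp ?_⟩
  rw [← hs]
  exact Submodule.span_le.mpr hm

lemma exists_WC_top [FiniteDimensional K V] : ∃ m₁ : ℤ, ∀ m, m₁ ≤ m → H.WC m = ⊤ := by
  obtain ⟨m₁, hm₁⟩ := H.exists_W_top
  refine ⟨m₁, fun m hm => top_le_iff.mp ?_⟩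
  calc (⊤ : Submodule ℂ (ℂ ⊗[K] V)) = (⊤ : Submodule K V).baseChange ℂ := by
        rw [Submodule.baseChange_top]
    _ ≤ H.WC m := by rw [← hm₁]; exact baseChange_mono' (H.W_mono' hm)

end PreMHS

end Aux
section Aux2
set_option linter.unusedSectionVars false

variable {K : Type} [Field K] [Algebra K ℝ] [Algebra K ℂ] [IsScalarTower K ℝ ℂ]
variable {V : Type} [AddCommGroup V] [Module K V]

namespace PreMHS

variable (H : PreMHS K V)

/-- The class of `x` in the weight-graded piece `GrW m`. -/
noncomputable def grMk (m : ℤ) (x : ℂ ⊗[K] V) (hx : x ∈ H.WC m) : H.GrW m :=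
  Submodule.Quotient.mk ⟨x, hx⟩

lemma grMk_eq_zero_iff {m : ℤ} {x : ℂ ⊗[K] V} (hx : x ∈ H.WC m) :
    H.grMk m x hx = 0 ↔ x ∈ H.WC (m - 1) := by
  rw [grMk, Submodule.Quotient.mk_eq_zero, Submodule.mem_comap]
  rfl

lemma grMk_add {m : ℤ} {x y : ℂ ⊗[K] V} (hx : x ∈ H.WC m) (hy : y ∈ H.WC m) :
    H.grMk m (x + y) (add_mem hx hy) = H.grMk m x hx + H.grMk m y hy := by
  rw [grMk, grMk, grMk, ← Submodule.Quotient.mk_add]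
  rfl

lemma grMk_eq_iff {m : ℤ} {x y : ℂ ⊗[K] V} (hx : x ∈ H.WC m) (hy : y ∈ H.WC m) :
    H.grMk m x hx = H.grMk m y hy ↔ x - y ∈ H.WC (m - 1) := by
  rw [grMk, grMk, Submodule.Quotient.eq, Submodule.mem_comap]
  rfl

lemma grMk_surjective {m : ℤ} (ξ : H.GrW m) : ∃ x hx, H.grMk m x hx = ξ := by
  obtain ⟨⟨x, hx⟩, rfl⟩ := Submodule.Quotient.mk_surjective _ ξ
  exact ⟨x, hx, rfl⟩

lemma grMk_mem_FGr {m p : ℤ} {x : ℂ ⊗[K] V} (hx : x ∈ H.WC m) (hxF : x ∈ H.F p) :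
    H.grMk m x hx ∈ H.FGr m p :=
  Submodule.mem_map_of_mem (by simpa [Submodule.mem_comap] using hxF)

lemma grMk_mem_cFGr {m q : ℤ} {x : ℂ ⊗[K] V} (hx : x ∈ H.WC m)
    (hxF : x ∈ conjSub K (H.F q)) :
    H.grMk m x hx ∈ H.cFGr m q :=
  Submodule.mem_map_of_mem (by simpa [Submodule.mem_comap] using hxF)

lemma exists_of_mem_FGr {m p : ℤ} {ξ : H.GrW m} (h : ξ ∈ H.FGr m p) :
    ∃ x hx, x ∈ H.F p ∧ H.grMk m x hx = ξ := by
  obtain ⟨⟨x, hx⟩, hxF, rfl⟩ := h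
  exact ⟨x, hx, hxF, rfl⟩

lemma exists_of_mem_cFGr {m q : ℤ} {ξ : H.GrW m} (h : ξ ∈ H.cFGr m q) :
    ∃ x hx, x ∈ conjSub K (H.F q) ∧ H.grMk m x hx = ξ := by
  obtain ⟨⟨x, hx⟩, hxF, rfl⟩ := h
  exact ⟨x, hx, hxF, rfl⟩

lemma FGr_antitone {m p p' : ℤ} (h : p ≤ p') : H.FGr m p' ≤ H.FGr m p :=
  Submodule.map_mono (Submodule.comap_mono (H.F_antitone h))

lemma cFGr_antitone {m q q' : ℤ} (h : q ≤ q') : H.cFGr m q' ≤ H.cFGr m q :=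
  Submodule.map_mono (Submodule.comap_mono (H.cF_antitone h))

lemma FGr_of_F_top {m p : ℤ} (h : H.F p = ⊤) : H.FGr m p = ⊤ := by
  rw [FGr, h, Submodule.comap_top, Submodule.map_top, Submodule.range_mkQ]

lemma FGr_of_F_bot {m p : ℤ} (h : H.F p = ⊥) : H.FGr m p = ⊥ := by
  rw [FGr, h]
  simp [Submodule.comap_bot]

-- opposedness consequences

variable {H}

lemma oppose_sup (hH : H.IsMHS) {m p q : ℤ} (h : p + q = m + 1) :
    H.FGr m p ⊔ H.cFGr m q = ⊤ := by
  have := (hH m p).codisjoint.eq_top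
  have hq : q = m - p + 1 := by omega
  rwa [hq]

lemma oppose_inf (hH : H.IsMHS) {m p q : ℤ} (h : p + q = m + 1) :
    H.FGr m p ⊓ H.cFGr m q = ⊥ := by
  have := (hH m p).disjoint.eq_bot
  have hq : q = m - p + 1 := by omega
  rwa [hq]

/-- Workhorse: split an element of `W_m` along the two opposed filtrations at level `m`. -/
lemma split_at_level (hH : H.IsMHS) {m p q : ℤ} (h : p + q = m + 1)
    {x : ℂ ⊗[K] V} (hx : x ∈ H.WC m) :
    ∃ u t, u ∈ H.F p ∧ u ∈ H.WC m ∧ t ∈ conjSub K (H.F q) ∧ t ∈ H.WC m ∧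
      x - u - t ∈ H.WC (m - 1) := by
  have hξ : H.grMk m x hx ∈ H.FGr m p ⊔ H.cFGr m q := by
    rw [oppose_sup hH h]; trivial
  obtain ⟨η, hη, ζ, hζ, hsum⟩ := Submodule.mem_sup.mp hξ
  obtain ⟨u, hu, huF, rfl⟩ := H.exists_of_mem_FGr hη
  obtain ⟨t, ht, htF, rfl⟩ := H.exists_of_mem_cFGr hζ
  refine ⟨u, t, huF, hu, htF, ht, ?_⟩
  have : H.grMk m x hx = H.grMk m (u + t) (add_mem hu ht) := by
    rw [H.grMk_add]; exact hsum.symm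
  have := (H.grMk_eq_iff hx (add_mem hu ht)).mp this
  rwa [sub_sub]

/-- Workhorse: disjointness at level `m`. -/
lemma vanish_at_level (hH : H.IsMHS) {m p q : ℤ} (h : p + q = m + 1)
    {x c : ℂ ⊗[K] V} (hx : x ∈ H.WC m) (hxF : x ∈ H.F p)
    (hcF : c ∈ conjSub K (H.F q)) (hc : c ∈ H.WC m)
    (hxc : x - c ∈ H.WC (m - 1)) : x ∈ H.WC (m - 1) := by
  have h1 : H.grMk m x hx = H.grMk m c hc := (H.grMk_eq_iff hx hc).mpr hxc
  have h2 : H.grMk m x hx ∈ H.FGr m p ⊓ H.cFGr m q := by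
    refine ⟨H.grMk_mem_FGr hx hxF, ?_⟩
    rw [h1]; exact H.grMk_mem_cFGr hc hcF
  rw [oppose_inf hH h, Submodule.mem_bot] at h2
  exact (H.grMk_eq_zero_iff hx).mp h2

end PreMHS

end Aux2
section Aux3
set_option linter.unusedSectionVars false

variable {K : Type} [Field K] [Algebra K ℝ] [Algebra K ℂ] [IsScalarTower K ℝ ℂ]
variable {V : Type} [AddCommGroup V] [Module K V]

/-- The "conjugate blob" in Deligne's formula. -/
noncomputable def deligneC (H : PreMHS K V) (q m : ℤ) : Submodule ℂ (ℂ ⊗[K] V) :=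
  (conjSub K (H.F q) ⊓ H.WC m) ⊔
    ⨆ j : {j : ℤ // 2 ≤ j}, (conjSub K (H.F (q - j.1 + 1)) ⊓ H.WC (m - j.1))

lemma deligneI_eq (H : PreMHS K V) (p q : ℤ) :
    deligneI K H p q = H.F p ⊓ H.WC (p + q) ⊓ deligneC H q (p + q) := rfl

namespace PreMHS

variable (H : PreMHS K V)

lemma head_le_deligneC (q m : ℤ) : conjSub K (H.F q) ⊓ H.WC m ≤ deligneC H q m :=
  le_sup_left

lemma tail_le_deligneC {j : ℤ} (hj : 2 ≤ j) (q m : ℤ) :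
    conjSub K (H.F (q - j + 1)) ⊓ H.WC (m - j) ≤ deligneC H q m :=
  le_trans (le_iSup (fun j : {j : ℤ // 2 ≤ j} =>
    conjSub K (H.F (q - j.1 + 1)) ⊓ H.WC (m - j.1)) ⟨j, hj⟩) le_sup_right

lemma mem_deligneC_of {j : ℤ} (hj : 1 ≤ j) {q m : ℤ} {t : ℂ ⊗[K] V}
    (h1 : t ∈ conjSub K (H.F (q - j + 1))) (h2 : t ∈ H.WC (m - j)) :
    t ∈ deligneC H q m := by
  rcases eq_or_lt_of_le hj with rfl | hj'
  · apply H.head_le_deligneC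
    refine ⟨by simpa using h1, H.WC_mono (by omega) h2⟩
  · exact H.tail_le_deligneC (by omega) q m ⟨h1, h2⟩

lemma deligneC_le_WC (q m : ℤ) : deligneC H q m ≤ H.WC m := by
  refine sup_le inf_le_right (iSup_le fun j => le_trans inf_le_right (H.WC_mono (by omega)))

/-- Key upper bound for the conjugate blob. -/
lemma deligneC_le_key {j : ℤ} (hj : 1 ≤ j) (q m : ℤ) :
    deligneC H q m ≤ conjSub K (H.F (q - j + 1)) ⊔ H.WC (m - j - 1) := by
  refine sup_le (le_trans inf_le_left ?_) (iSup_le fun i => ?_)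
  · exact le_trans (H.cF_antitone (by omega)) le_sup_left
  · rcases le_or_gt i.1 j with hij | hij
    · exact le_trans inf_le_left (le_trans (H.cF_antitone (by omega)) le_sup_left)
    · exact le_trans inf_le_right (le_trans (H.WC_mono (by omega)) le_sup_right)

lemma deligneC_le_head_sup (q m : ℤ) :
    deligneC H q m ≤ (conjSub K (H.F q) ⊓ H.WC m) ⊔ H.WC (m - 2) := by
  refine sup_le le_sup_left (iSup_le fun i =>
    le_trans inf_le_right (le_trans (H.WC_mono (by omega)) le_sup_right))

lemma deligneI_le_F (p q : ℤ) : deligneI K H p q ≤ H.F p :=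
  le_trans inf_le_left inf_le_left

lemma deligneI_le_WC (p q : ℤ) : deligneI K H p q ≤ H.WC (p + q) :=
  le_trans inf_le_left inf_le_right

lemma deligneI_le_deligneC (p q : ℤ) : deligneI K H p q ≤ deligneC H q (p + q) :=
  inf_le_right

variable {H}

/-- Injectivity: `I^{p,q} ∩ W_{p+q-1} = 0`. -/
lemma deligneI_inf_WC (hH : H.IsMHS) (p q : ℤ) :
    deligneI K H p q ⊓ H.WC (p + q - 1) = ⊥ := by
  set m := p + q with hm
  obtain ⟨m₀, hm₀⟩ := H.exists_WC_bot
  have key : ∀ j : ℤ, 1 ≤ j → deligneI K H p q ⊓ H.WC (m - 1) ≤ H.WC (m - j) := by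
    intro j hj
    refine Int.le_induction (motive := fun j _ => deligneI K H p q ⊓ H.WC (m - 1) ≤ H.WC (m - j))
      inf_le_right ?_ j hj
    intro n hn ih
    intro x hx
    have hxW : x ∈ H.WC (m - n) := ih hx
    have hxF : x ∈ H.F p := H.deligneI_le_F p q hx.1
    have hxC : x ∈ conjSub K (H.F (q - n + 1)) ⊔ H.WC (m - n - 1) :=
      H.deligneC_le_key hn q m (H.deligneI_le_deligneC p q hx.1)
    obtain ⟨c, hc, w, hw, rfl⟩ := Submodule.mem_sup.mp hxC
    have hcW : c ∈ H.WC (m - n) := by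
      have : c = (c + w) - w := by abel
      rw [this]
      exact sub_mem hxW (H.WC_mono (by omega) hw)
    have hsub : (c + w) - c ∈ H.WC (m - n - 1) := by simpa using hw
    have := vanish_at_level hH (m := m - n) (p := p) (q := q - n + 1) (by omega)
      hxW hxF hc hcW hsub
    have hmn : m - (n + 1) = m - n - 1 := by omega
    rwa [hmn]
  rw [eq_bot_iff]
  rintro x ⟨h1, h2⟩
  have h3 : x ∈ H.WC (m - (m - m₀ + 1)) := by
    rcases le_or_gt 1 (m - m₀ + 1) with h | h
    · exact key _ h ⟨h1, h2⟩
    · exact H.WC_mono (by omega) h2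
  have : H.WC (m - (m - m₀ + 1)) = ⊥ := hm₀ _ (by omega)
  rw [this] at h3
  exact h3

/-- Surjectivity: every class in `FGr ⊓ cFGr` lifts to `I^{p,q}`. -/
lemma deligneI_lift (hH : H.IsMHS) {p q m : ℤ} (hpq : p + q = m) {ξ : H.GrW m}
    (hξ : ξ ∈ H.FGr m p ⊓ H.cFGr m q) :
    ∃ v hv, v ∈ deligneI K H p q ∧ H.grMk m v hv = ξ := by
  obtain ⟨m₀, hm₀⟩ := H.exists_WC_bot
  -- downward induction principle
  have main : ∀ j : ℤ, j ≤ max 1 (m - m₀) → 1 ≤ j →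
      ∀ a, a ∈ H.F p → ∀ ha : a ∈ H.WC m,
      (∃ b ∈ deligneC H q m, a - b ∈ H.WC (m - j)) →
      ∃ w, w ∈ H.F p ∧ w ∈ H.WC (m - 1) ∧ a - w ∈ deligneC H q m := by
    intro j hj
    refine Int.le_induction_down (motive := fun j _ => 1 ≤ j → ∀ a, a ∈ H.F p → ∀ ha : a ∈ H.WC m,
      (∃ b ∈ deligneC H q m, a - b ∈ H.WC (m - j)) →
      ∃ w, w ∈ H.F p ∧ w ∈ H.WC (m - 1) ∧ a - w ∈ deligneC H q m) ?_ ?_ j hj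
    · -- base case : j = max 1 (m - m₀)
      intro _ a haF ha ⟨b, hb, hab⟩
      have hbot : H.WC (m - max 1 (m - m₀)) = ⊥ := hm₀ _ (by omega)
      rw [hbot, Submodule.mem_bot, sub_eq_zero] at hab
      exact ⟨0, Submodule.zero_mem _, Submodule.zero_mem _, by rw [sub_zero, hab]; exact hb⟩
    · -- step downward
      intro n _ ih hn1 a haF ha ⟨b, hb, hab⟩
      -- here n - 1 ≥ 1, so n ≥ 2
      set ℓ := m - (n - 1) with hℓ
      have habW : a - b ∈ H.WC ℓ := hab
      obtain ⟨u, t, huF, huW, htF, htW, hrest⟩ :=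
        split_at_level hH (m := ℓ) (p := p) (q := q - (n - 1) + 1) (by omega) habW
      have h2n : 2 ≤ n := by omega
      have htC : t ∈ deligneC H q m :=
        H.mem_deligneC_of (j := n - 1) (by omega)
          (by simpa using htF) (by simpa [hℓ] using htW)
      have hstep : (a - u) - (b + t) ∈ H.WC (m - n) := by
        have : (a - u) - (b + t) = a - b - u - t := by abel
        rw [this]
        have hmn : ℓ - 1 = m - n := by omega
        rwa [hmn] at hrest
      have haF' : a - u ∈ H.F p := sub_mem haF huF
      have haW' : a - u ∈ H.WC m := sub_mem ha (H.WC_mono (by omega) huW)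
      obtain ⟨w', hw'F, hw'W, hw'C⟩ := ih (by omega) (a - u) haF' haW'
        ⟨b + t, Submodule.add_mem _ hb htC, hstep⟩
      refine ⟨u + w', add_mem huF hw'F, add_mem (H.WC_mono (by omega) huW) hw'W, ?_⟩
      have : a - (u + w') = (a - u) - w' := by abel
      rw [this]
      exact hw'C
  -- now apply
  obtain ⟨a, ha, haF, hagr⟩ := H.exists_of_mem_FGr hξ.1
  obtain ⟨b, hbW, hbF, hbgr⟩ := H.exists_of_mem_cFGr hξ.2
  have hab : a - b ∈ H.WC (m - 1) := by
    rw [← H.grMk_eq_iff ha hbW, hagr, hbgr]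
  obtain ⟨w, hwF, hwW, hwC⟩ := main 1 (le_max_left _ _) le_rfl a haF ha
    ⟨b, H.head_le_deligneC q m ⟨hbF, hbW⟩, by simpa using hab⟩
  have hvW : a - w ∈ H.WC m := sub_mem ha (H.WC_mono (by omega) hwW)
  refine ⟨a - w, hvW, ?_, ?_⟩
  · rw [deligneI_eq, hpq]
    exact ⟨⟨sub_mem haF hwF, hvW⟩, hwC⟩
  · rw [← hagr, H.grMk_eq_iff]
    simpa using hwW

end PreMHS

end Aux3
section Aux4
set_option linter.unusedSectionVars false

variable {K : Type} [Field K] [Algebra K ℝ] [Algebra K ℂ] [IsScalarTower K ℝ ℂ]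
variable {V : Type} [AddCommGroup V] [Module K V]

namespace PreMHS

variable {H : PreMHS K V}

/-- Easy direction: the class of an element of `I^{p,q}` lies in `FGr ⊓ cFGr`. -/
lemma grMk_deligneI_mem {p q m : ℤ} (hpq : p + q = m) {v : ℂ ⊗[K] V}
    (hv : v ∈ deligneI K H p q) (hvW : v ∈ H.WC m) :
    H.grMk m v hvW ∈ H.FGr m p ⊓ H.cFGr m q := by
  subst hpq
  refine ⟨H.grMk_mem_FGr hvW (H.deligneI_le_F p q hv), ?_⟩
  have := H.deligneC_le_head_sup q (p + q) (H.deligneI_le_deligneC p q hv)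
  obtain ⟨c, hc, w, hw, hcw⟩ := Submodule.mem_sup.mp this
  have hcW : c ∈ H.WC (p + q) := hc.2
  have : H.grMk (p + q) v hvW = H.grMk (p + q) c hcW := by
    rw [H.grMk_eq_iff]
    have : v - c = w := by rw [← hcw]; abel
    rw [this]
    exact H.WC_mono (by omega) hw
  rw [this]
  exact H.grMk_mem_cFGr hcW hc.1

/-- One step of the Hodge decomposition of the graded pieces. -/
lemma FGr_step (hH : H.IsMHS) (m p : ℤ) :
    H.FGr m p ≤ (H.FGr m p ⊓ H.cFGr m (m - p)) ⊔ H.FGr m (p + 1) := by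
  intro x hx
  have hsplit : x ∈ H.FGr m (p + 1) ⊔ H.cFGr m (m - p) := by
    rw [oppose_sup hH (by omega : (p + 1) + (m - p) = m + 1)]
    trivial
  obtain ⟨y, hy, z, hz, rfl⟩ := Submodule.mem_sup.mp hsplit
  have hz' : z ∈ H.FGr m p := by
    have hzz : z = (y + z) - y := by abel
    rw [hzz]
    exact Submodule.sub_mem _ hx (H.FGr_antitone (by omega) hy)
  exact Submodule.add_mem _ (Submodule.mem_sup_right hy) (Submodule.mem_sup_left ⟨hz', hz⟩)
  
/-- Hodge decomposition of the filtration on the graded pieces. -/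
lemma FGr_le_iSup (hH : H.IsMHS) (m k : ℤ) :
    H.FGr m k ≤ ⨆ p : {p : ℤ // k ≤ p}, (H.FGr m p.1 ⊓ H.cFGr m (m - p.1)) := by
  obtain ⟨k₁, hk₁⟩ := H.exists_F_bot
  rcases le_or_gt k₁ k with h | h
  · rw [H.FGr_of_F_bot (hk₁ k h)]
    exact bot_le
  · -- downward induction from k₁
    have main : ∀ n : ℤ, n ≤ k₁ →
        H.FGr m n ≤ ⨆ p : {p : ℤ // n ≤ p}, (H.FGr m p.1 ⊓ H.cFGr m (m - p.1)) := by
      intro n hn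
      refine Int.le_induction_down (motive := fun n _ =>
        H.FGr m n ≤ ⨆ p : {p : ℤ // n ≤ p}, (H.FGr m p.1 ⊓ H.cFGr m (m - p.1))) ?_ ?_ n hn
      · exact le_trans (le_of_eq (H.FGr_of_F_bot (hk₁ k₁ le_rfl))) bot_le
      · intro n _ ih
        refine le_trans (FGr_step hH m (n - 1)) (sup_le ?_ ?_)
        · exact le_iSup (fun p : {p : ℤ // n - 1 ≤ p} =>
            (H.FGr m p.1 ⊓ H.cFGr m (m - p.1))) ⟨n - 1, le_rfl⟩
        · have : n - 1 + 1 = n := by omega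
          rw [this]
          refine le_trans ih (iSup_le fun p => ?_)
          exact le_iSup (fun p : {p : ℤ // n - 1 ≤ p} =>
            (H.FGr m p.1 ⊓ H.cFGr m (m - p.1))) ⟨p.1, by omega⟩
    exact main k (by omega)

/-- Disjointness of the Hodge pieces on the graded quotients. -/
lemma Abar_disjoint (hH : H.IsMHS) {m p q : ℤ} (h : p + q = m) :
    (H.FGr m p ⊓ H.cFGr m q) ⊓ (H.FGr m (p + 1) ⊔ H.cFGr m (q + 1)) = ⊥ := by
  rw [eq_bot_iff]
  rintro x ⟨⟨hxF, hxc⟩, hx2⟩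
  obtain ⟨f, hf, c, hc, rfl⟩ := Submodule.mem_sup.mp hx2
  have hc0 : c ∈ H.FGr m p ⊓ H.cFGr m (q + 1) := by
    constructor
    · have : c = (f + c) - f := by abel
      rw [this]
      exact Submodule.sub_mem _ hxF (H.FGr_antitone (by omega) hf)
    · exact hc
  rw [oppose_inf hH (by omega : p + (q + 1) = m + 1)] at hc0
  rw [Submodule.mem_bot] at hc0
  subst hc0
  have hf0 : f ∈ H.FGr m (p + 1) ⊓ H.cFGr m q := ⟨hf, by simpa using hxc⟩
  rw [oppose_inf hH (by omega : (p + 1) + q = m + 1), Submodule.mem_bot] at hf0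
  simp [hf0]

end PreMHS

end Aux4
section Aux5
set_option linter.unusedSectionVars false

variable {K : Type} [Field K] [Algebra K ℝ] [Algebra K ℂ] [IsScalarTower K ℝ ℂ]
variable {V : Type} [AddCommGroup V] [Module K V]

namespace PreMHS

variable {H : PreMHS K V}

/-- The main accumulation identity: `F^k ∩ W_m = Σ_{p ≥ k, p+q ≤ m} I^{p,q}`. -/
lemma F_inf_WC_eq (hH : H.IsMHS) (k : ℤ) (m : ℤ) :
    H.F k ⊓ H.WC m =
      ⨆ pq : {pq : ℤ × ℤ // k ≤ pq.1 ∧ pq.1 + pq.2 ≤ m}, deligneI K H pq.1.1 pq.1.2 := by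
  refine le_antisymm ?_ (iSup_le fun pq => le_inf
    (le_trans (H.deligneI_le_F _ _) (H.F_antitone pq.2.1))
    (le_trans (H.deligneI_le_WC _ _) (H.WC_mono pq.2.2)))
  obtain ⟨m₀, hm₀⟩ := H.exists_WC_bot
  rcases le_or_gt m m₀ with hm | hm
  · rw [hm₀ m hm]
    simp
  have key : ∀ n : ℤ, m₀ ≤ n → H.F k ⊓ H.WC n ≤
      ⨆ pq : {pq : ℤ × ℤ // k ≤ pq.1 ∧ pq.1 + pq.2 ≤ n}, deligneI K H pq.1.1 pq.1.2 := by
    intro n hn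
    refine Int.le_induction (motive := fun n _ => H.F k ⊓ H.WC n ≤
      ⨆ pq : {pq : ℤ × ℤ // k ≤ pq.1 ∧ pq.1 + pq.2 ≤ n}, deligneI K H pq.1.1 pq.1.2)
      ?_ ?_ n hn
    · refine le_trans inf_le_right (le_trans (le_of_eq (hm₀ m₀ le_rfl)) bot_le)
    · intro n hn ih
      intro x hx
      set M := n + 1 with hM
      have hxW : x ∈ H.WC M := hx.2
      have hξ : H.grMk M x hxW ∈ H.FGr M k := H.grMk_mem_FGr hxW hx.1
      have hξ2 := FGr_le_iSup hH M k hξ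
      -- transfer to a statement about lifts
      set Smod := ⨆ p : {p : ℤ // k ≤ p}, deligneI K H p.1 (M - p.1) with hSmod
      have hT : (⨆ p : {p : ℤ // k ≤ p}, (H.FGr M p.1 ⊓ H.cFGr M (M - p.1))) ≤
          Submodule.map (Submodule.mkQ _) (Smod.comap (H.WC M).subtype) := by
        refine iSup_le fun p => ?_
        intro ξ hζ
        obtain ⟨v, hv, hvI, hgr⟩ := deligneI_lift hH (by omega : p.1 + (M - p.1) = M) hζ
        refine ⟨⟨v, hv⟩, ?_, hgr⟩
        exact le_iSup (fun p : {p : ℤ // k ≤ p} => deligneI K H p.1 (M - p.1)) p hvI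
      obtain ⟨⟨z, hzW⟩, hzS, hzgr⟩ := hT hξ2
      replace hzS : z ∈ Smod := hzS
      have hzgr' : H.grMk M z hzW = H.grMk M x hxW := hzgr
      have hxz : x - z ∈ H.WC n := by
        have := (H.grMk_eq_iff hzW hxW).mp hzgr'
        have h2 : z - x ∈ H.WC n := by
          have hn1 : M - 1 = n := by omega
          rwa [hn1] at this
        have : x - z = -(z - x) := by abel
        rw [this]
        exact Submodule.neg_mem _ h2
      have hzF : z ∈ H.F k := by
        have : Smod ≤ H.F k := iSup_le fun p =>
          le_trans (H.deligneI_le_F _ _) (H.F_antitone p.2)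
        exact this hzS
      have hxzIH := ih ⟨sub_mem hx.1 hzF, hxz⟩
      have hxsum : x = z + (x - z) := by abel
      rw [hxsum]
      refine Submodule.add_mem _ ?_ ?_
      · refine (iSup_le fun p : {p : ℤ // k ≤ p} => ?_ :
          Smod ≤ ⨆ pq : {pq : ℤ × ℤ // k ≤ pq.1 ∧ pq.1 + pq.2 ≤ M},
            deligneI K H pq.1.1 pq.1.2) hzS
        exact le_iSup (fun pq : {pq : ℤ × ℤ // k ≤ pq.1 ∧ pq.1 + pq.2 ≤ M} =>
          deligneI K H pq.1.1 pq.1.2) ⟨(p.1, M - p.1), p.2, by omega⟩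
      · refine (iSup_le fun pq => ?_ :
          (⨆ pq : {pq : ℤ × ℤ // k ≤ pq.1 ∧ pq.1 + pq.2 ≤ n}, deligneI K H pq.1.1 pq.1.2) ≤ _)
          hxzIH
        exact le_iSup (fun pq : {pq : ℤ × ℤ // k ≤ pq.1 ∧ pq.1 + pq.2 ≤ M} =>
          deligneI K H pq.1.1 pq.1.2) ⟨pq.1, pq.2.1, by omega⟩
  exact key m (by omega)

end PreMHS

end Aux5
section Aux6
set_option linter.unusedSectionVars false

variable {K : Type} [Field K] [Algebra K ℝ] [Algebra K ℂ] [IsScalarTower K ℝ ℂ]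
variable {V : Type} [AddCommGroup V] [Module K V]

namespace PreMHS

variable {H : PreMHS K V}

open scoped Classical in
/-- Independence of the `I^{p,q}` of a common weight, relative to lower weight. -/
lemma level_indep (hH : H.IsMHS) (m : ℤ) (s : Finset (ℤ × ℤ)) (y : ℤ × ℤ → ℂ ⊗[K] V)
    (hlevel : ∀ j ∈ s, j.1 + j.2 = m) (hmem : ∀ j ∈ s, y j ∈ deligneI K H j.1 j.2)
    (hsum : (∑ j ∈ s, y j) ∈ H.WC (m - 1)) : ∀ j ∈ s, y j = 0 := by
  have hyW : ∀ j ∈ s, y j ∈ H.WC m := by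
    intro j hj
    have := H.deligneI_le_WC j.1 j.2 (hmem j hj)
    rwa [hlevel j hj] at this
  set ycap : ℤ × ℤ → H.WC m := fun j => if h : j ∈ s then ⟨y j, hyW j h⟩ else 0 with hycap
  set Q : H.WC m →ₗ[ℂ] H.GrW m := Submodule.mkQ _ with hQ
  have hQval : ∀ j (h : j ∈ s), Q (ycap j) = H.grMk m (y j) (hyW j h) := by
    intro j h
    simp only [hycap, dif_pos h]
    rfl
  have hQsum : (∑ j ∈ s, Q (ycap j)) = 0 := by
    rw [← map_sum]
    have hval : ((∑ j ∈ s, ycap j : H.WC m) : ℂ ⊗[K] V) = ∑ j ∈ s, y j := by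
      rw [Submodule.coe_sum]
      exact Finset.sum_congr rfl fun j hj => by simp [hycap, dif_pos hj]
    rw [hQ, Submodule.mkQ_apply, Submodule.Quotient.mk_eq_zero, Submodule.mem_comap]
    show ((∑ j ∈ s, ycap j : H.WC m) : ℂ ⊗[K] V) ∈ H.WC (m - 1)
    rw [hval]
    exact hsum
  intro j₀ hj₀
  have hj₀level := hlevel j₀ hj₀
  -- the class of y j₀ is in the (p,q) piece and in the complementary sup
  have h1 : Q (ycap j₀) ∈ H.FGr m j₀.1 ⊓ H.cFGr m j₀.2 := by
    rw [hQval j₀ hj₀]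
    exact grMk_deligneI_mem hj₀level (hmem j₀ hj₀) _
  have h2 : Q (ycap j₀) ∈ H.FGr m (j₀.1 + 1) ⊔ H.cFGr m (j₀.2 + 1) := by
    have : Q (ycap j₀) = -∑ j ∈ s.erase j₀, Q (ycap j) := by
      have h := Finset.add_sum_erase s (fun j => Q (ycap j)) hj₀
      rw [hQsum] at h
      exact eq_neg_of_add_eq_zero_left h
    rw [this]
    refine Submodule.neg_mem _ (Submodule.sum_mem _ fun j hj => ?_)
    have hjs : j ∈ s := Finset.mem_of_mem_erase hj
    have hjne : j ≠ j₀ := Finset.ne_of_mem_erase hj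
    have hfst : j.1 ≠ j₀.1 := by
      intro hfst
      apply hjne
      have := hlevel j hjs
      have h2 : j.2 = j₀.2 := by omega
      exact Prod.ext hfst h2
    have hj1 : Q (ycap j) ∈ H.FGr m j.1 ⊓ H.cFGr m j.2 := by
      rw [hQval j hjs]
      exact grMk_deligneI_mem (hlevel j hjs) (hmem j hjs) _
    rcases lt_or_gt_of_ne hfst with hlt | hgt
    · -- j.1 < j₀.1, so j.2 ≥ j₀.2 + 1
      refine Submodule.mem_sup_right (H.cFGr_antitone ?_ hj1.2)
      have := hlevel j hjs
      omega
    · exact Submodule.mem_sup_left (H.FGr_antitone (by omega) hj1.1)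
  have h0 : Q (ycap j₀) = 0 := by
    have := Abar_disjoint hH hj₀level
    have hmem0 : Q (ycap j₀) ∈ (⊥ : Submodule ℂ (H.GrW m)) := by
      rw [← this]; exact ⟨h1, h2⟩
    simpa using hmem0
  -- conclude y j₀ = 0
  have hyWm1 : y j₀ ∈ H.WC (m - 1) := by
    rw [hQval j₀ hj₀] at h0
    exact (H.grMk_eq_zero_iff (hyW j₀ hj₀)).mp h0
  have : y j₀ ∈ deligneI K H j₀.1 j₀.2 ⊓ H.WC (j₀.1 + j₀.2 - 1) := by
    refine ⟨hmem j₀ hj₀, ?_⟩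
    rwa [hj₀level]
  rw [deligneI_inf_WC hH] at this
  simpa using this

open scoped Classical in
/-- Finite sums of elements of the `I^{p,q}` vanishing must vanish termwise. -/
lemma finsum_indep (hH : H.IsMHS) (m : ℤ) (s : Finset (ℤ × ℤ)) (y : ℤ × ℤ → ℂ ⊗[K] V)
    (hlevel : ∀ j ∈ s, j.1 + j.2 ≤ m) (hmem : ∀ j ∈ s, y j ∈ deligneI K H j.1 j.2)
    (hsum : (∑ j ∈ s, y j) = 0) : ∀ j ∈ s, y j = 0 := by
  obtain ⟨m₀, hm₀⟩ := H.exists_WC_bot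
  have triv : ∀ n ≤ m₀, ∀ (s : Finset (ℤ × ℤ)) (y : ℤ × ℤ → ℂ ⊗[K] V),
      (∀ j ∈ s, j.1 + j.2 ≤ n) → (∀ j ∈ s, y j ∈ deligneI K H j.1 j.2) →
      ∀ j ∈ s, y j = 0 := by
    intro n hn s y hlev hm j hj
    have : y j ∈ H.WC m₀ := H.WC_mono (le_trans (hlev j hj) hn)
      (H.deligneI_le_WC j.1 j.2 (hm j hj))
    rw [hm₀ m₀ le_rfl] at this
    simpa using this
  rcases le_or_gt m m₀ with hm' | hm'
  · exact triv m hm' s y hlevel hmem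
  have key : ∀ n : ℤ, m₀ ≤ n → ∀ (s : Finset (ℤ × ℤ)) (y : ℤ × ℤ → ℂ ⊗[K] V),
      (∀ j ∈ s, j.1 + j.2 ≤ n) → (∀ j ∈ s, y j ∈ deligneI K H j.1 j.2) →
      (∑ j ∈ s, y j) = 0 → ∀ j ∈ s, y j = 0 := by
    intro n hn
    refine Int.le_induction (motive := fun n _ => ∀ (s : Finset (ℤ × ℤ)) (y : ℤ × ℤ → ℂ ⊗[K] V),
      (∀ j ∈ s, j.1 + j.2 ≤ n) → (∀ j ∈ s, y j ∈ deligneI K H j.1 j.2) →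
      (∑ j ∈ s, y j) = 0 → ∀ j ∈ s, y j = 0) ?_ ?_ n hn
    · intro s y hlev hm _
      exact triv m₀ le_rfl s y hlev hm
    · intro n _ ih s y hlev hm hs
      set st := s.filter (fun j => j.1 + j.2 = n + 1) with hst
      set sr := s.filter (fun j => ¬ (j.1 + j.2 = n + 1)) with hsr
      have hsplit : (∑ j ∈ st, y j) + (∑ j ∈ sr, y j) = ∑ j ∈ s, y j :=
        Finset.sum_filter_add_sum_filter_not s _ y
      have hrW : (∑ j ∈ sr, y j) ∈ H.WC n := by
        refine Submodule.sum_mem _ fun j hj => ?_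
        have hjs : j ∈ s := Finset.mem_of_mem_filter j hj
        have hne : ¬ (j.1 + j.2 = n + 1) := (Finset.mem_filter.mp hj).2
        exact H.WC_mono (by have := hlev j hjs; omega)
          (H.deligneI_le_WC j.1 j.2 (hm j hjs))
      have htW : (∑ j ∈ st, y j) ∈ H.WC ((n + 1) - 1) := by
        have heq : (∑ j ∈ st, y j) = -(∑ j ∈ sr, y j) := by
          rw [hs] at hsplit
          exact eq_neg_of_add_eq_zero_left hsplit
        rw [heq]
        have hn1 : (n + 1) - 1 = n := by omega
        rw [hn1]
        exact Submodule.neg_mem _ hrW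
      have hz := level_indep hH (n + 1) st y
        (fun j hj => (Finset.mem_filter.mp hj).2)
        (fun j hj => hm j (Finset.mem_of_mem_filter j hj)) htW
      have hsr0 : (∑ j ∈ sr, y j) = 0 := by
        have : (∑ j ∈ st, y j) = 0 := Finset.sum_eq_zero hz
        rw [this, zero_add] at hsplit
        rw [hsplit, hs]
      have hzr := ih sr y
        (fun j hj => by
          have := hlev j (Finset.mem_of_mem_filter j hj)
          have := (Finset.mem_filter.mp hj).2
          omega)
        (fun j hj => hm j (Finset.mem_of_mem_filter j hj)) hsr0
      intro j hj
      by_cases hcase : j.1 + j.2 = n + 1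
      · exact hz j (Finset.mem_filter.mpr ⟨hj, hcase⟩)
      · exact hzr j (Finset.mem_filter.mpr ⟨hj, hcase⟩)
  exact key m (le_of_lt hm') s y hlevel hmem hsum

end PreMHS

end Aux6
section Aux7
set_option linter.unusedSectionVars false

variable {K : Type} [Field K] [Algebra K ℝ] [Algebra K ℂ] [IsScalarTower K ℝ ℂ]
variable {V : Type} [AddCommGroup V] [Module K V]

lemma exists_level_bound (s : Finset (ℤ × ℤ)) : ∃ m : ℤ, ∀ j ∈ s, j.1 + j.2 ≤ m := by
  classical
  induction s using Finset.induction with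
  | empty => exact ⟨0, by simp⟩
  | @insert a t ha ih =>
      obtain ⟨m, hm⟩ := ih
      refine ⟨max m (a.1 + a.2), fun j hj => ?_⟩
      rcases Finset.mem_insert.mp hj with rfl | hj
      · exact le_max_right _ _
      · exact le_trans (hm j hj) (le_max_left _ _)

namespace PreMHS

variable {H : PreMHS K V}

lemma deligneI_iSupIndep (hH : H.IsMHS) :
    iSupIndep (fun pq : ℤ × ℤ => deligneI K H pq.1 pq.2) := by
  classical
  rw [iSupIndep_def]
  intro i
  rw [Submodule.disjoint_def]
  intro x hxi hxsup
  rw [Submodule.mem_iSup_iff_exists_finsupp] at hxsup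
  obtain ⟨f, hf, hfsum⟩ := hxsup
  have hfmem : ∀ j, j ≠ i → f j ∈ deligneI K H j.1 j.2 := by
    intro j hj
    have := hf j
    rwa [iSup_pos hj] at this
  have hfi : f i = 0 := by
    have := hf i
    rw [iSup_neg (by simp)] at this
    simpa using this
  have hinotin : i ∉ f.support := by simp [Finsupp.mem_support_iff, hfi]
  set s : Finset (ℤ × ℤ) := insert i f.support with hsdef
  set y : ℤ × ℤ → ℂ ⊗[K] V := fun j => if j = i then -x else f j with hydef
  have hymem : ∀ j ∈ s, y j ∈ deligneI K H j.1 j.2 := by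
    intro j hj
    by_cases hji : j = i
    · subst hji
      simp only [hydef, if_pos rfl]
      exact Submodule.neg_mem _ hxi
    · simp only [hydef, if_neg hji]
      exact hfmem j hji
  have hysum : (∑ j ∈ s, y j) = 0 := by
    rw [hsdef, Finset.sum_insert hinotin]
    have h1 : y i = -x := by simp [hydef]
    have h2 : (∑ j ∈ f.support, y j) = x := by
      rw [← hfsum]
      refine Finset.sum_congr rfl fun j hj => ?_
      have hji : j ≠ i := fun h => hinotin (h ▸ hj)
      simp [hydef, if_neg hji]
    rw [h1, h2]
    abel
  obtain ⟨m, hm⟩ := exists_level_bound s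
  have := finsum_indep hH m s y hm hymem hysum i (Finset.mem_insert_self _ _)
  simp only [hydef, if_pos rfl, neg_eq_zero] at this
  exact this

end PreMHS

-- functoriality helpers

variable {V' : Type} [AddCommGroup V'] [Module K V']

lemma map_baseChange_le (f : V →ₗ[K] V') (S : Submodule K V) :
    (S.baseChange ℂ).map (f.baseChange ℂ) ≤ (S.map f).baseChange ℂ := by
  rw [Submodule.baseChange_eq_span, Submodule.map_span]
  refine Submodule.span_le.mpr ?_
  rintro _ ⟨_, ⟨v, hv, rfl⟩, rfl⟩
  have : f.baseChange ℂ ((TensorProduct.mk K ℂ V 1) v) = (1 : ℂ) ⊗ₜ[K] f v := by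
    simp [TensorProduct.mk_apply]
  rw [this]
  exact Submodule.tmul_mem_baseChange_of_mem 1 (Submodule.mem_map_of_mem hv)

lemma conjT_baseChange_comm (f : V →ₗ[K] V') (x : ℂ ⊗[K] V) :
    f.baseChange ℂ (conjT K x) = conjT K (f.baseChange ℂ x) := by
  induction x using TensorProduct.induction_on with
  | zero => simp
  | tmul c v => rw [conjT_tmul]; simp [conjT_tmul]
  | add x y hx hy => rw [map_add, map_add, hx, hy, map_add, map_add]

lemma map_conjSub_le (f : V →ₗ[K] V') (S : Submodule ℂ (ℂ ⊗[K] V)) :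
    (conjSub K S).map (f.baseChange ℂ) ≤ conjSub K (S.map (f.baseChange ℂ)) := by
  rintro _ ⟨x, hx, rfl⟩
  obtain ⟨y, hy, rfl⟩ := hx
  rw [conjT_baseChange_comm]
  exact ⟨f.baseChange ℂ y, Submodule.mem_map_of_mem hy, rfl⟩

lemma deligneI_map_le {H : PreMHS K V} {H' : PreMHS K V'} {f : V →ₗ[K] V'}
    (hf : IsMHSHom K H H' f) (p q : ℤ) :
    (deligneI K H p q).map (f.baseChange ℂ) ≤ deligneI K H' p q := by
  have hW : ∀ m, (H.WC m).map (f.baseChange ℂ) ≤ H'.WC m := fun m =>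
    le_trans (map_baseChange_le f _) (baseChange_mono' (hf.mapW m))
  have hcF : ∀ r, (conjSub K (H.F r)).map (f.baseChange ℂ) ≤ conjSub K (H'.F r) := fun r =>
    le_trans (map_conjSub_le f _) (conjSub_mono (hf.mapF r))
  rw [deligneI_eq, deligneI_eq]
  refine le_inf (le_inf ?_ ?_) ?_
  · exact le_trans (Submodule.map_mono (le_trans inf_le_left inf_le_left)) (hf.mapF p)
  · exact le_trans (Submodule.map_mono (le_trans inf_le_left inf_le_right)) (hW _)
  · refine le_trans (Submodule.map_mono inf_le_right) ?_
    rw [deligneC, deligneC, Submodule.map_sup, Submodule.map_iSup]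
    refine sup_le_sup ?_ (iSup_mono fun j => ?_)
    · exact le_inf (le_trans (Submodule.map_mono inf_le_left) (hcF q))
        (le_trans (Submodule.map_mono inf_le_right) (hW _))
    · exact le_inf (le_trans (Submodule.map_mono inf_le_left) (hcF _))
        (le_trans (Submodule.map_mono inf_le_right) (hW _))

end Aux7
/-- Every mixed Hodge structure admits a Deligne splitting
`V_ℂ = ⊕ I^{p,q}` with `W_m V_ℂ = ⊕_{p+q≤m} I^{p,q}` and `F^k = ⊕_{p≥k} I^{p,q}`,
given by Deligne's canonical construction, and this splitting is functorial. -/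
theorem deligne_splitting {V : Type} [AddCommGroup V] [Module K V]
    [FiniteDimensional K V] (H : PreMHS K V) (hH : H.IsMHS) :
    (iSupIndep (fun pq : ℤ × ℤ => deligneI K H pq.1 pq.2)) ∧
    (⨆ pq : ℤ × ℤ, deligneI K H pq.1 pq.2) = ⊤ ∧
    (∀ m, H.WC m = ⨆ pq : {pq : ℤ × ℤ // pq.1 + pq.2 ≤ m}, deligneI K H pq.1.1 pq.1.2) ∧
    (∀ p₀, H.F p₀ = ⨆ pq : {pq : ℤ × ℤ // p₀ ≤ pq.1}, deligneI K H pq.1.1 pq.1.2) ∧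
    (∀ (V' : Type) (_ : AddCommGroup V') (_ : Module K V') (_ : FiniteDimensional K V')
      (H' : PreMHS K V') (_ : H'.IsMHS) (f : V →ₗ[K] V') (_ : IsMHSHom K H H' f)
      (p q : ℤ), (deligneI K H p q).map (f.baseChange ℂ) ≤ deligneI K H' p q) := by
  obtain ⟨k₀, hk₀⟩ := H.exists_F_top
  obtain ⟨m₁, hm₁⟩ := H.exists_WC_top
  refine ⟨PreMHS.deligneI_iSupIndep hH, ?_, ?_, ?_, ?_⟩
  · -- the sup is everything
    rw [eq_top_iff]
    have h := PreMHS.F_inf_WC_eq hH k₀ m₁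
    rw [hk₀ k₀ le_rfl, hm₁ m₁ le_rfl, inf_top_eq] at h
    rw [h]
    exact iSup_le fun pq => le_iSup (fun pq : ℤ × ℤ => deligneI K H pq.1 pq.2) pq.1
  · -- weight filtration
    intro m
    have h := PreMHS.F_inf_WC_eq hH k₀ m
    rw [hk₀ k₀ le_rfl, top_inf_eq] at h
    refine le_antisymm ?_ (iSup_le fun pq =>
      le_trans (H.deligneI_le_WC _ _) (H.WC_mono pq.2))
    rw [h]
    exact iSup_le fun pq => le_iSup
      (fun pq : {pq : ℤ × ℤ // pq.1 + pq.2 ≤ m} => deligneI K H pq.1.1 pq.1.2)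
      ⟨pq.1, pq.2.2⟩
  · -- Hodge filtration
    intro p₀
    have h := PreMHS.F_inf_WC_eq hH p₀ m₁
    rw [hm₁ m₁ le_rfl, inf_top_eq] at h
    refine le_antisymm ?_ (iSup_le fun pq =>
      le_trans (H.deligneI_le_F _ _) (H.F_antitone pq.2))
    rw [h]
    exact iSup_le fun pq => le_iSup
      (fun pq : {pq : ℤ × ℤ // p₀ ≤ pq.1} => deligneI K H pq.1.1 pq.1.2)
      ⟨pq.1, pq.2.1⟩
  · -- functoriality
    intro V' _ _ _ H' _ f hf p q
    exact deligneI_map_le hf p q
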